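/- Jet support closures need not be monotone: in R = k[[x, y]] with I = (x^2 y^3), the monomial x^2 y^2 belongs to I^{5-jsc} but not to I^{4-jsc}; hence I^{5-jsc} ⊄ I^{4-jsc}. -/

import Mathlib

open Polynomial

/-- The truncated polynomial ring `A[t]/(t^(m+1))`. -/
abbrev JetTrunc (A : Type) [CommRing A] (m : ℕ) : Type :=
  Polynomial A ⧸ (Ideal.span {(X : Polynomial A) ^ (m + 1)} : Ideal (Polynomial A))

/-- The image of the variable `t` in `A[t]/(t^(m+1))`. -/
noncomputable def jetT (A : Type) [CommRing A] (m : ℕ) : JetTrunc A m :=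
  Ideal.Quotient.mk _ (X : Polynomial A)

/-- A test datum for the `m`-th jet closure of an ideal `I` of a local `k`-algebra `(R, 𝔪)`:
a `k`-algebra `A` together with a `k`-algebra map `φ : R → A[t]/(t^(m+1))` killing `I`
and sending the maximal ideal `𝔪` into `(t)` (i.e. an `A`-point of the scheme of local
`m`-jets of `Spec (R/I)` over the closed point). -/
structure JetTest (k : Type) [CommRing k] {R : Type} [CommRing R] [Algebra k R]
    (𝔪 : Ideal R) (m : ℕ) (I : Ideal R) where
  A : Type
  [instCommRing : CommRing A]
  [instAlgebra : Algebra k A]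
  φ : R →ₐ[k] JetTrunc A m
  ker_I : ∀ f ∈ I, φ f = 0
  max_to_t : ∀ f ∈ 𝔪, φ f ∈ Ideal.span {jetT A m}

attribute [instance] JetTest.instCommRing JetTest.instAlgebra

/-- The `m`-th jet closure `I^{m-jc}` of an ideal `I` in a local `k`-algebra `(R, 𝔪)`:
the intersection of the kernels of all jet test maps (functor-of-points description of the
kernel of `μ_m : R → R_m[t]/(t^(m+1), I_m, 𝔪^e)`). -/
noncomputable def jetClosure (k : Type) [CommRing k] {R : Type} [CommRing R] [Algebra k R]
    (𝔪 : Ideal R) (m : ℕ) (I : Ideal R) : Ideal R :=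
  sInf { J : Ideal R | ∃ T : JetTest k 𝔪 m I, J = RingHom.ker T.φ }

/-- A test datum for the `m`-th jet support closure: like a jet closure test,
but with the coefficient `k`-algebra `A` required to be reduced (functor-of-points
description of maps from `(R_m/(I_m + 𝔪^e))_red`). -/
structure JetSupportTest (k : Type) [CommRing k] {R : Type} [CommRing R] [Algebra k R]
    (𝔪 : Ideal R) (m : ℕ) (I : Ideal R) where
  A : Type
  [instCommRing : CommRing A]
  [instReduced : IsReduced A]
  [instAlgebra : Algebra k A]
  φ : R →ₐ[k] JetTrunc A m
  ker_I : ∀ f ∈ I, φ f = 0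
  max_to_t : ∀ f ∈ 𝔪, φ f ∈ Ideal.span {jetT A m}

attribute [instance] JetSupportTest.instCommRing JetSupportTest.instReduced
  JetSupportTest.instAlgebra

/-- The `m`-th jet support closure `I^{m-jsc}` of an ideal `I` in a local `k`-algebra
`(R, 𝔪)`. -/
noncomputable def jetSupportClosure (k : Type) [CommRing k] {R : Type} [CommRing R]
    [Algebra k R] (𝔪 : Ideal R) (m : ℕ) (I : Ideal R) : Ideal R :=
  sInf { J : Ideal R | ∃ T : JetSupportTest k 𝔪 m I, J = RingHom.ker T.φ }

/-- The maximal ideal `(x_1, ..., x_n)` of the formal power series ring `k[[x_1, ..., x_n]]`. -/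
noncomputable def mIdeal (k : Type) [Field k] (n : ℕ) : Ideal (MvPowerSeries (Fin n) k) :=
  RingHom.ker (MvPowerSeries.constantCoeff : MvPowerSeries (Fin n) k →+* k)

/-- The variable `x` in `k[[x, y]]`. -/
noncomputable def xx (k : Type) [Field k] : MvPowerSeries (Fin 2) k := MvPowerSeries.X 0

/-- The variable `y` in `k[[x, y]]`. -/
noncomputable def yy (k : Type) [Field k] : MvPowerSeries (Fin 2) k := MvPowerSeries.X 1

section Aux

variable (A : Type) [CommRing A] (m : ℕ)

/-- Evaluation at `t = 0` on the truncated polynomial ring. -/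
noncomputable def epsJet : JetTrunc A m →ₐ[A] A :=
  Ideal.Quotient.liftₐ _ (Polynomial.aeval (0 : A)) (by
    intro p hp
    rw [Ideal.mem_span_singleton] at hp
    obtain ⟨q, rfl⟩ := hp
    simp)

lemma epsJet_mk (P : Polynomial A) :
    epsJet A m (Ideal.Quotient.mk _ P) = P.eval 0 := by
  simp [epsJet, Ideal.Quotient.liftₐ_apply, Polynomial.coe_aeval_eq_eval]

lemma jetT_pow_succ : jetT A m ^ (m + 1) = 0 := by
  rw [jetT, ← map_pow, Ideal.Quotient.eq_zero_iff_mem]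
  exact Ideal.subset_span rfl

lemma epsJet_jetT : epsJet A m (jetT A m) = 0 := by
  rw [jetT, epsJet_mk]; simp

variable {A m}

lemma epsJet_eq_zero_of (z : JetTrunc A m) (h : jetT A m ^ m * z = 0) :
    epsJet A m z = 0 := by
  obtain ⟨Z, rfl⟩ := Ideal.Quotient.mk_surjective z
  rw [jetT, ← map_pow, ← map_mul, Ideal.Quotient.eq_zero_iff_mem,
    Ideal.mem_span_singleton] at h
  obtain ⟨q, hq⟩ := h
  have h2 : ((X : Polynomial A) ^ m * Z).coeff m = ((X : Polynomial A) ^ (m + 1) * q).coeff m := by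
    rw [hq]
  rw [mul_comm ((X : Polynomial A) ^ m), mul_comm ((X : Polynomial A) ^ (m + 1)),
    Polynomial.coeff_mul_X_pow', Polynomial.coeff_mul_X_pow', if_pos le_rfl,
    if_neg (by omega)] at h2
  simp only [Nat.sub_self] at h2
  rw [epsJet_mk, ← Polynomial.coeff_zero_eq_eval_zero]
  exact h2

lemma exists_of_epsJet_eq_zero (z : JetTrunc A m) (h : epsJet A m z = 0) :
    ∃ q, z = jetT A m * q := by
  obtain ⟨Z, rfl⟩ := Ideal.Quotient.mk_surjective z
  rw [epsJet_mk, ← Polynomial.coeff_zero_eq_eval_zero, ← Polynomial.X_dvd_iff] at h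
  obtain ⟨q, rfl⟩ := h
  exact ⟨Ideal.Quotient.mk _ q, by rw [jetT, ← map_mul]⟩

end Aux

section Phi

/-- The exponent bound `(5,5)` used for truncation. -/
noncomputable def NN : Fin 2 →₀ ℕ := Finsupp.equivFunOnFinite.symm (fun _ => 5)

lemma NN_apply (i : Fin 2) : NN i = 5 := rfl

lemma NN_ne_zero : NN ≠ 0 := by
  intro h
  have := congrFun (congrArg (fun g : Fin 2 →₀ ℕ => (g : Fin 2 → ℕ)) h) 0
  simp [NN_apply] at this

lemma lt_NN_of (d : Fin 2 →₀ ℕ) (hd : d 0 + d 1 ≤ 4) : d < NN := by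
  rw [lt_iff_le_and_ne]
  constructor
  · intro i; fin_cases i <;> simp [NN_apply] <;> omega
  · intro h
    have := congrFun (congrArg (fun g : Fin 2 →₀ ℕ => (g : Fin 2 → ℕ)) h) 0
    simp [NN_apply] at this
    omega

lemma five_le_of_not_lt_NN (d : Fin 2 →₀ ℕ) (hd : ¬ d < NN) : 5 ≤ d 0 + d 1 := by
  by_contra h
  exact hd (lt_NN_of d (by omega))

variable (k : Type) [CommRing k]

lemma aeval_kill (P : MvPolynomial (Fin 2) k) (hP : ∀ d ∈ P.support, ¬ d < NN) :
    MvPolynomial.aeval (fun _ : Fin 2 => jetT k 4) P = 0 := by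
  conv_lhs => rw [P.as_sum]
  rw [map_sum]
  refine Finset.sum_eq_zero fun d hd => ?_
  rw [MvPolynomial.aeval_monomial]
  have h5 : 5 ≤ d 0 + d 1 := five_le_of_not_lt_NN d (hP d hd)
  have hz : (d.prod fun _ n => jetT k 4 ^ n) = 0 := by
    rw [Finsupp.prod_pow, Fin.prod_univ_two, ← pow_add]
    obtain ⟨e, he⟩ := Nat.exists_eq_add_of_le h5
    rw [he, pow_add]
    rw [show (5 : ℕ) = 4 + 1 from rfl, jetT_pow_succ, zero_mul]
  rw [hz, mul_zero]

/-- The substitution `x ↦ t`, `y ↦ t` into `k[t]/(t^5)`. -/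
noncomputable def phiSub : MvPowerSeries (Fin 2) k →ₐ[k] JetTrunc k 4 where
  toFun f := MvPolynomial.aeval (fun _ : Fin 2 => jetT k 4) (MvPowerSeries.trunc k NN f)
  map_one' := by
    show MvPolynomial.aeval (fun _ : Fin 2 => jetT k 4) (MvPowerSeries.trunc k NN 1) = 1
    rw [show MvPowerSeries.trunc k NN (1 : MvPowerSeries (Fin 2) k) = 1 from
      MvPowerSeries.trunc_one NN NN_ne_zero, map_one]
  map_mul' f g := by
    have key : ∀ d ∈ (MvPowerSeries.trunc k NN (f * g) -
        MvPowerSeries.trunc k NN f * MvPowerSeries.trunc k NN g).support, ¬ d < NN := by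
      intro d hd hlt
      rw [MvPolynomial.mem_support_iff] at hd
      apply hd
      rw [MvPolynomial.coeff_sub, MvPowerSeries.coeff_trunc, if_pos hlt,
        MvPolynomial.coeff_mul, MvPowerSeries.coeff_mul, sub_eq_zero]
      refine Finset.sum_congr rfl fun p hp => ?_
      rw [Finset.HasAntidiagonal.mem_antidiagonal] at hp
      have h1 : p.1 < NN := lt_of_le_of_lt (hp ▸ le_add_self.trans_eq (add_comm p.2 p.1)) hlt
      have h2 : p.2 < NN := lt_of_le_of_lt (hp ▸ le_add_self) hlt
      rw [MvPowerSeries.coeff_trunc, MvPowerSeries.coeff_trunc, if_pos h1, if_pos h2]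
    have h0 := aeval_kill k _ key
    rw [map_sub, map_mul (MvPolynomial.aeval fun _ : Fin 2 => jetT k 4), sub_eq_zero] at h0
    exact h0
  map_zero' := by
    show MvPolynomial.aeval (fun _ : Fin 2 => jetT k 4) (MvPowerSeries.trunc k NN 0) = 0
    rw [show MvPowerSeries.trunc k NN (0 : MvPowerSeries (Fin 2) k) = 0 from
      map_zero (MvPowerSeries.trunc k NN), map_zero]
  map_add' f g := by
    show MvPolynomial.aeval (fun _ : Fin 2 => jetT k 4) (MvPowerSeries.trunc k NN (f + g)) =
      MvPolynomial.aeval (fun _ : Fin 2 => jetT k 4) (MvPowerSeries.trunc k NN f) +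
      MvPolynomial.aeval (fun _ : Fin 2 => jetT k 4) (MvPowerSeries.trunc k NN g)
    rw [show MvPowerSeries.trunc k NN (f + g) =
      MvPowerSeries.trunc k NN f + MvPowerSeries.trunc k NN g from
      map_add (MvPowerSeries.trunc k NN) f g, map_add]
  commutes' r := by
    show MvPolynomial.aeval (fun _ : Fin 2 => jetT k 4)
      (MvPowerSeries.trunc k NN ((algebraMap k (MvPowerSeries (Fin 2) k)) r)) = _
    rw [show (algebraMap k (MvPowerSeries (Fin 2) k)) r = (MvPowerSeries.C r : MvPowerSeries (Fin 2) k) by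
        rw [MvPowerSeries.c_eq_algebraMap],
      show MvPowerSeries.trunc k NN ((MvPowerSeries.C r : MvPowerSeries (Fin 2) k)) = MvPolynomial.C r from
        MvPowerSeries.trunc_C NN NN_ne_zero r, MvPolynomial.aeval_C]

lemma truncFun_monomial (d : Fin 2 →₀ ℕ) (c : k) (h : d < NN) :
    MvPowerSeries.trunc k NN (MvPowerSeries.monomial d c) = MvPolynomial.monomial d c := by
  ext e
  rw [MvPowerSeries.coeff_trunc, MvPolynomial.coeff_monomial]
  by_cases he : e = d
  · subst he; rw [if_pos h, if_pos rfl, MvPowerSeries.coeff_monomial_same]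
  · rw [if_neg (Ne.symm he)]
    split_ifs with h'
    · exact MvPowerSeries.coeff_monomial_ne he c
    · rfl

lemma phiSub_X (s : Fin 2) : phiSub k (MvPowerSeries.X s) = jetT k 4 := by
  show MvPolynomial.aeval _ (MvPowerSeries.trunc k NN (MvPowerSeries.monomial
    (Finsupp.single s 1) 1)) = _
  have hlt : Finsupp.single s 1 < NN := by
    apply lt_NN_of
    fin_cases s <;> simp [Finsupp.single_apply]
  rw [truncFun_monomial k _ _ hlt, MvPolynomial.aeval_monomial]
  simp [Finsupp.prod_single_index]

lemma jetT4_ne [Nontrivial k] : jetT k 4 ^ 4 ≠ 0 := by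
  intro h
  rw [jetT, ← map_pow, Ideal.Quotient.eq_zero_iff_mem, Ideal.mem_span_singleton] at h
  obtain ⟨q, hq⟩ := h
  have h4 : ((X : Polynomial k) ^ 4).coeff 4 = (q * (X : Polynomial k) ^ (4 + 1)).coeff 4 := by
    rw [hq, mul_comm]
  rw [Polynomial.coeff_X_pow, Polynomial.coeff_mul_X_pow', if_pos rfl, if_neg (by omega)] at h4
  exact one_ne_zero h4

end Phi

/-- jet support closures need not be monotone: in `k[[x, y]]` with
`I = (x^2 y^3)`, one has `x^2 y^2 ∈ I^{5-jsc}` but `x^2 y^2 ∉ I^{4-jsc}`; hence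
`I^{5-jsc} ⊄ I^{4-jsc}`. -/
theorem jetSupportClosure_not_monotone (k : Type) [Field k] [IsAlgClosed k] [CharZero k] :
    xx k ^ 2 * yy k ^ 2 ∈
        jetSupportClosure k (mIdeal k 2) 5 (Ideal.span {xx k ^ 2 * yy k ^ 3}) ∧
      xx k ^ 2 * yy k ^ 2 ∉
        jetSupportClosure k (mIdeal k 2) 4 (Ideal.span {xx k ^ 2 * yy k ^ 3}) ∧
      ¬ jetSupportClosure k (mIdeal k 2) 5 (Ideal.span {xx k ^ 2 * yy k ^ 3}) ≤
          jetSupportClosure k (mIdeal k 2) 4 (Ideal.span {xx k ^ 2 * yy k ^ 3}) := by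
  have hx : xx k ∈ mIdeal k 2 := by
    rw [mIdeal, RingHom.mem_ker, xx]
    exact MvPowerSeries.constantCoeff_X 0
  have hy : yy k ∈ mIdeal k 2 := by
    rw [mIdeal, RingHom.mem_ker, yy]
    exact MvPowerSeries.constantCoeff_X 1
  -- Part 1 : membership in the 5-th jet support closure
  have h1 : xx k ^ 2 * yy k ^ 2 ∈
      jetSupportClosure k (mIdeal k 2) 5 (Ideal.span {xx k ^ 2 * yy k ^ 3}) := by
    rw [jetSupportClosure, Ideal.mem_sInf]
    rintro J ⟨T, rfl⟩
    rw [RingHom.mem_ker]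
    set s := jetT T.A 5 with hs
    obtain ⟨u, hu⟩ := Ideal.mem_span_singleton.mp (T.max_to_t (xx k) hx)
    obtain ⟨v, hv⟩ := Ideal.mem_span_singleton.mp (T.max_to_t (yy k) hy)
    have h0 := T.ker_I _ (Ideal.mem_span_singleton_self (xx k ^ 2 * yy k ^ 3))
    rw [map_mul, map_pow, map_pow, hu, hv] at h0
    have h5 : s ^ 5 * (u ^ 2 * v ^ 3) = 0 := by linear_combination h0
    have he : epsJet T.A 5 (u ^ 2 * v ^ 3) = 0 := epsJet_eq_zero_of _ h5
    rw [map_mul, map_pow, map_pow] at he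
    set a := epsJet T.A 5 u with ha
    set b := epsJet T.A 5 v with hb
    have hab : a * b = 0 := IsNilpotent.eq_zero ⟨3, by linear_combination a * he⟩
    set c := algebraMap T.A (JetTrunc T.A 5) a with hc
    set d := algebraMap T.A (JetTrunc T.A 5) b with hd
    have hcd : c * d = 0 := by rw [hc, hd, ← map_mul, hab, map_zero]
    have hec : epsJet T.A 5 c = a := by
      rw [hc]; exact (epsJet T.A 5).commutes a
    have hed : epsJet T.A 5 d = b := by
      rw [hd]; exact (epsJet T.A 5).commutes b
    obtain ⟨u', hu'⟩ := exists_of_epsJet_eq_zero (u - c) (by rw [map_sub, hec, ha, sub_self])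
    obtain ⟨v', hv'⟩ := exists_of_epsJet_eq_zero (v - d) (by rw [map_sub, hed, hb, sub_self])
    have hu2 : u = c + s * u' := by linear_combination hu'
    have hv2 : v = d + s * v' := by linear_combination hv'
    rw [map_mul, map_pow, map_pow, hu, hv, hu2, hv2]
    have hs6 : s ^ 6 = 0 := jetT_pow_succ T.A 5
    have hw : (c + s * u') * (d + s * v') = s * (c * v' + d * u' + s * (u' * v')) := by
      linear_combination hcd
    calc (s * (c + s * u')) ^ 2 * (s * (d + s * v')) ^ 2
        = s ^ 4 * ((c + s * u') * (d + s * v')) ^ 2 := by ring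
      _ = s ^ 4 * (s * (c * v' + d * u' + s * (u' * v'))) ^ 2 := by rw [hw]
      _ = s ^ 6 * (c * v' + d * u' + s * (u' * v')) ^ 2 := by ring
      _ = 0 := by rw [hs6, zero_mul]
  -- Part 2 : the witness test for m = 4
  have h2 : xx k ^ 2 * yy k ^ 2 ∉
      jetSupportClosure k (mIdeal k 2) 4 (Ideal.span {xx k ^ 2 * yy k ^ 3}) := by
    intro hmem
    have hker : ∀ f ∈ Ideal.span {xx k ^ 2 * yy k ^ 3}, phiSub k f = 0 := by
      intro f hf
      obtain ⟨g, rfl⟩ := Ideal.mem_span_singleton.mp hf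
      rw [map_mul]
      have : phiSub k (xx k ^ 2 * yy k ^ 3) = 0 := by
        rw [map_mul, map_pow, map_pow, xx, yy, phiSub_X, phiSub_X, ← pow_add]
        exact jetT_pow_succ k 4
      rw [this, zero_mul]
    have hmax : ∀ f ∈ mIdeal k 2, phiSub k f ∈ Ideal.span {jetT k 4} := by
      intro f hf
      have heps : epsJet k 4 (phiSub k f) = 0 := by
        rw [show phiSub k f = MvPolynomial.aeval (fun _ : Fin 2 => jetT k 4)
          (MvPowerSeries.trunc k NN f) from rfl]
        rw [MvPolynomial.comp_aeval_apply]
        have : (fun i : Fin 2 => epsJet k 4 (jetT k 4)) = fun _ : Fin 2 => (0 : k) := by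
          funext i; rw [epsJet_jetT]
        rw [this, MvPolynomial.aeval_zero']
        rw [MvPolynomial.constantCoeff_eq]
        rw [MvPowerSeries.coeff_trunc, if_pos, MvPowerSeries.coeff_zero_eq_constantCoeff]
        · have := RingHom.mem_ker.mp hf
          rw [mIdeal, RingHom.mem_ker] at hf
          simpa using hf
        · rw [lt_iff_le_and_ne]
          exact ⟨zero_le, fun h => NN_ne_zero h.symm⟩
      obtain ⟨q, hq⟩ := exists_of_epsJet_eq_zero _ heps
      exact Ideal.mem_span_singleton.mpr ⟨q, hq⟩
    set T : JetSupportTest k (mIdeal k 2) 4 (Ideal.span {xx k ^ 2 * yy k ^ 3}) :=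
      { A := k, φ := phiSub k, ker_I := hker, max_to_t := hmax } with hT
    have hle : jetSupportClosure k (mIdeal k 2) 4 (Ideal.span {xx k ^ 2 * yy k ^ 3}) ≤
        RingHom.ker T.φ := sInf_le ⟨T, rfl⟩
    have h0 : phiSub k (xx k ^ 2 * yy k ^ 2) = 0 := RingHom.mem_ker.mp (hle hmem)
    rw [map_mul, map_pow, map_pow, xx, yy, phiSub_X, phiSub_X, ← pow_add] at h0
    exact jetT4_ne k h0
  exact ⟨h1, h2, fun hle => h2 (hle h1)⟩
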